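/- Let E be a real inner product space, m ≥ 1 a natural number, τ ≥ 0, τ̂ > 2τ, L > 0, N a natural number, and μ = 1/(m·√(N+1)). Let f₁, …, f_m : E → ℝ each be τ-weakly convex and Lipschitz with constant L, and let f = (1/m)∑ᵢ fᵢ. Let P : E → E be such that for every x ∈ E, P x is a global minimizer of y ↦ f(y) + (τ̂/2)‖y − x‖², define the Moreau envelope F(x) = f(P x) + (τ̂/2)‖P x − x‖², and suppose there is Finf ∈ ℝ with F(x) ≥ Finf for all x ∈ E. Let X₀, X₁, …, X_{N+1} ∈ E be such that for each k ≤ N there exist inner iterates y_{k,0}, …, y_{k,m} with y_{k,0} = X_k, X_{k+1} = y_{k,m}, and y_{k,i} = y_{k,i−1} − μ·g_{k,i} for i = 1, …, m, where each g_{k,i} ∈ E satisfies ‖g_{k,i}‖ ≤ L and fᵢ(w) ≥ fᵢ(y_{k,i−1}) + ⟨g_{k,i}, w − y_{k,i−1}⟩ − (τ/2)‖w − y_{k,i−1}‖² for all w ∈ E. Then min over 0 ≤ k ≤ N of τ̂²‖X_k − P X_k‖² is at most [τ̂(F(X₀) − Finf) + (1 + τ̂/(τ̂ − τ))·τ̂²L²]/((τ̂/2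 − τ)·√(N+1)) + (1 + τ̂/(τ̂ − τ))²·τ·τ̂²L²/((τ̂/2 − τ)·(N+1)). -/

import Mathlib

set_option maxHeartbeats 4000000

open scoped RealInnerProductSpace

theorem incremental_subgradient_sublinear_rate
    {E : Type*} [NormedAddCommGroup E] [InnerProductSpace ℝ E]
    (m : ℕ) (hm : 1 ≤ m) (τ τh L : ℝ) (hτ : 0 ≤ τ) (hτh : 2 * τ < τh) (hL : 0 < L)
    (N : ℕ) (μ : ℝ) (hμ : μ = 1 / (m * Real.sqrt (N + 1)))
    (f : ℕ → E → ℝ)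
    (hwc : ∀ i < m, ConvexOn ℝ Set.univ (fun x => f i x + τ / 2 * ‖x‖ ^ 2))
    (hlip : ∀ i < m, ∀ x y : E, |f i x - f i y| ≤ L * ‖x - y‖)
    (P : E → E)
    (hP : ∀ x z : E,
      (1 / (m : ℝ)) * ∑ i ∈ Finset.range m, f i (P x) + τh / 2 * ‖P x - x‖ ^ 2 ≤
        (1 / (m : ℝ)) * ∑ i ∈ Finset.range m, f i z + τh / 2 * ‖z - x‖ ^ 2)
    (F : E → ℝ)
    (hF : ∀ x : E,
      F x = (1 / (m : ℝ)) * ∑ i ∈ Finset.range m, f i (P x) + τh / 2 * ‖P x - x‖ ^ 2)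
    (Finf : ℝ) (hFinf : ∀ x : E, Finf ≤ F x)
    (X : ℕ → E) (y g : ℕ → ℕ → E)
    (hy0 : ∀ k ≤ N, y k 0 = X k) (hXs : ∀ k ≤ N, X (k + 1) = y k m)
    (hupd : ∀ k ≤ N, ∀ i < m, y k (i + 1) = y k i - μ • g k i)
    (hg : ∀ k ≤ N, ∀ i < m, ‖g k i‖ ≤ L)
    (hsub : ∀ k ≤ N, ∀ i < m, ∀ w : E,
      f i w ≥ f i (y k i) + ⟪g k i, w - y k i⟫ - τ / 2 * ‖w - y k i‖ ^ 2) :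
    ∃ k ≤ N, τh ^ 2 * ‖X k - P (X k)‖ ^ 2 ≤
      (τh * (F (X 0) - Finf) + (1 + τh / (τh - τ)) * τh ^ 2 * L ^ 2) /
          ((τh / 2 - τ) * Real.sqrt (N + 1)) +
        (1 + τh / (τh - τ)) ^ 2 * τ * τh ^ 2 * L ^ 2 / ((τh / 2 - τ) * (N + 1)) := by
  have hm0 : (0:ℝ) < m := by exact_mod_cast Nat.lt_of_lt_of_le Nat.zero_lt_one hm
  have hm1 : (1:ℝ) ≤ m := by exact_mod_cast hm
  have hτh0 : 0 < τh := by linarith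
  obtain ⟨Q, hQdef⟩ : ∃ q : ℝ, q = Real.sqrt (N + 1) := ⟨_, rfl⟩
  rw [← hQdef] at hμ ⊢
  have hN1 : (0:ℝ) < (N:ℝ) + 1 := by positivity
  have hQ2 : Q ^ 2 = (N:ℝ) + 1 := by rw [hQdef]; exact Real.sq_sqrt (by positivity)
  have hQ0 : 0 < Q := by rw [hQdef]; exact Real.sqrt_pos.mpr hN1
  have hQ1 : 1 ≤ Q := by
    nlinarith [hQ2]
  have hμ0 : 0 < μ := by rw [hμ]; positivity
  have hs : (m:ℝ) * μ = 1 / Q := by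
    rw [hμ]; field_simp
  obtain ⟨s, hsdef⟩ : ∃ t : ℝ, t = (m:ℝ) * μ := ⟨_, rfl⟩
  rw [← hsdef] at hs
  have hs0 : 0 < s := by rw [hsdef]; positivity
  have hμs : μ ≤ s := by
    rw [hsdef]; nlinarith
  obtain ⟨A, hAdef⟩ : ∃ a : ℝ, a = τh / 2 - τ := ⟨_, rfl⟩
  have hA0 : 0 < A := by rw [hAdef]; linarith
  -- the per-step error
  obtain ⟨e, hedef⟩ : ∃ x : ℝ, x = 3 / 2 * τh * s ^ 2 * L ^ 2 + τh * τ * s ^ 3 * L ^ 2 := ⟨_, rfl⟩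
  obtain ⟨c, hcdef⟩ : ∃ x : ℝ, x = A * τh * s := ⟨_, rfl⟩
  have hc0 : 0 < c := by rw [hcdef]; positivity
  -- key per-step inequality
  have key : ∀ k ≤ N, c * ‖X k - P (X k)‖ ^ 2 ≤ F (X k) - F (X (k + 1)) + e := by
    intro k hk
    obtain ⟨xh, hxh⟩ : ∃ z : E, z = P (X k) := ⟨_, rfl⟩
    obtain ⟨D, hD⟩ : ∃ d : ℝ, d = ‖X k - xh‖ := ⟨_, rfl⟩
    have hD0 : 0 ≤ D := hD ▸ norm_nonneg _
    -- bound on inner iterate drift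
    have LemB : ∀ i ≤ m, ‖y k i - X k‖ ≤ (i:ℝ) * μ * L := by
      intro i hi
      induction i with
      | zero => simp [hy0 k hk]
      | succ n ih =>
        have hn : n < m := Nat.lt_of_succ_le hi
        have ihn := ih (le_of_lt hn)
        rw [hupd k hk n hn]
        have : y k n - μ • g k n - X k = (y k n - X k) + (-μ) • g k n := by module
        rw [this]
        refine le_trans (norm_add_le _ _) ?_
        rw [norm_smul, Real.norm_eq_abs, abs_neg, abs_of_pos hμ0]
        have := hg k hk n hn
        push_cast
        nlinarith
    have hyX : ∀ i ≤ m, ‖y k i - X k‖ ≤ s * L := by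
      intro i hi
      refine le_trans (LemB i hi) ?_
      have h' : (i:ℝ) ≤ (m:ℝ) := by exact_mod_cast hi
      rw [hsdef]
      have h2 := mul_le_mul_of_nonneg_right (mul_le_mul_of_nonneg_right h' (le_of_lt hμ0)) (le_of_lt hL)
      linarith
    -- squared distance to xh along inner iterates
    have hxy2 : ∀ i ≤ m, ‖xh - y k i‖ ^ 2 ≤ 2 * D ^ 2 + 2 * s ^ 2 * L ^ 2 := by
      intro i hi
      have h1 : ‖xh - y k i‖ ≤ D + s * L := by
        have : xh - y k i = -(X k - xh) + (X k - y k i) := by module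
        rw [this]
        refine le_trans (norm_add_le _ _) ?_
        rw [norm_neg, ← norm_sub_rev (y k i), ← hD]
        exact add_le_add le_rfl (hyX i hi)
      have h2 : 0 ≤ ‖xh - y k i‖ := norm_nonneg _
      nlinarith [mul_self_le_mul_self h2 h1, sq_nonneg (D - s * L), mul_pos hs0 hL]
    -- main inner recursion
    have LemC : ∀ i ≤ m, ‖xh - y k i‖ ^ 2 ≤
        D ^ 2 + 2 * μ * (∑ j ∈ Finset.range i, (f j xh - f j (X k)))
          + (i:ℝ) * (2 * μ * (s * L ^ 2 + τ * (D ^ 2 + s ^ 2 * L ^ 2)) + μ ^ 2 * L ^ 2) := by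
      intro i hi
      induction i with
      | zero =>
        rw [hD, hy0 k hk, norm_sub_rev (X k) xh]
        simp
      | succ n ih =>
        have hn : n < m := Nat.lt_of_succ_le hi
        have ihn := ih (le_of_lt hn)
        have hexp : ‖xh - y k (n+1)‖ ^ 2 =
            ‖xh - y k n‖ ^ 2 + 2 * μ * ⟪g k n, xh - y k n⟫ + μ ^ 2 * ‖g k n‖ ^ 2 := by
          rw [hupd k hk n hn]
          have h : xh - (y k n - μ • g k n) = (xh - y k n) + μ • g k n := by module
          rw [h, norm_add_sq_real, real_inner_smul_right, norm_smul, Real.norm_eq_abs,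
            mul_pow, sq_abs, real_inner_comm]
          ring
        have hsub' : ⟪g k n, xh - y k n⟫ ≤ f n xh - f n (y k n) + τ / 2 * ‖xh - y k n‖ ^ 2 := by
          have := hsub k hk n hn xh
          linarith
        have hfl : f n (X k) - f n (y k n) ≤ L * (s * L) := by
          have h1 := hlip n hn (X k) (y k n)
          have h2 := hyX n (le_of_lt hn)
          have h3 : f n (X k) - f n (y k n) ≤ L * ‖X k - y k n‖ :=
            le_trans (le_abs_self _) h1
          rw [← norm_sub_rev (y k n)] at h3
          nlinarith
        have hq := hxy2 n (le_of_lt hn)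
        have hgn : ‖g k n‖ ^ 2 ≤ L ^ 2 := by
          have := hg k hk n hn
          nlinarith [norm_nonneg (g k n)]
        rw [Finset.sum_range_succ]
        push_cast
        have hip : 2 * μ * ⟪g k n, xh - y k n⟫ ≤
            2 * μ * (f n xh - f n (X k)) + 2 * μ * (s * L ^ 2)
              + 2 * μ * (τ * (D ^ 2 + s ^ 2 * L ^ 2)) := by
          have h1 : ⟪g k n, xh - y k n⟫ ≤
              (f n xh - f n (X k)) + s * L ^ 2 + τ * (D ^ 2 + s ^ 2 * L ^ 2) := by
            have hτq : τ / 2 * ‖xh - y k n‖ ^ 2 ≤ τ * (D ^ 2 + s ^ 2 * L ^ 2) := by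
              have := mul_le_mul_of_nonneg_left hq (by positivity : (0:ℝ) ≤ τ / 2)
              linarith
            linarith [hsub', hfl]
          have := mul_le_mul_of_nonneg_left h1 (by positivity : (0:ℝ) ≤ 2 * μ)
          linarith
        have hgn2 := mul_le_mul_of_nonneg_left hgn (sq_nonneg μ)
        linarith [hip, hexp, ihn, hgn2]
    -- i = m
    have hCm := LemC m le_rfl
    rw [← hXs k hk] at hCm
    -- sum rewrite
    have hsumeq : (∑ j ∈ Finset.range m, (f j xh - f j (X k)))
        = (∑ j ∈ Finset.range m, f j xh) - ∑ j ∈ Finset.range m, f j (X k) :=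
      Finset.sum_sub_distrib _ _
    -- minimality of xh
    have hmne : (m:ℝ) ≠ 0 := ne_of_gt hm0
    have hT : (∑ j ∈ Finset.range m, f j xh) - ∑ j ∈ Finset.range m, f j (X k)
        ≤ -((m:ℝ) * (τh / 2) * D ^ 2) := by
      have h1 := hP (X k) (X k)
      rw [sub_self, norm_zero] at h1
      rw [← hxh, norm_sub_rev, ← hD] at h1
      have h2 : (1 / (m:ℝ)) * ((∑ j ∈ Finset.range m, f j xh)
          - ∑ j ∈ Finset.range m, f j (X k)) ≤ -(τh / 2 * D ^ 2) := by
        rw [mul_sub]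
        nlinarith [h1]
      have h3 := mul_le_mul_of_nonneg_left h2 (le_of_lt hm0)
      rw [← mul_assoc, mul_one_div_cancel hmne, one_mul] at h3
      linarith
    -- envelope bounds
    have hF1 : F (X (k + 1)) ≤ (1 / (m:ℝ)) * (∑ j ∈ Finset.range m, f j xh)
        + τh / 2 * ‖xh - X (k + 1)‖ ^ 2 := by
      have h := hP (X (k + 1)) xh
      rw [← hF (X (k+1))] at h
      exact h
    have hF0 : F (X k) = (1 / (m:ℝ)) * (∑ j ∈ Finset.range m, f j xh)
        + τh / 2 * D ^ 2 := by
      rw [hF (X k), ← hxh, norm_sub_rev, ← hD]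
    -- combine
    rw [hsumeq] at hCm
    obtain ⟨T, hTdef⟩ : ∃ t : ℝ, t = (∑ j ∈ Finset.range m, f j xh)
        - ∑ j ∈ Finset.range m, f j (X k) := ⟨_, rfl⟩
    rw [← hTdef] at hCm hT
    have e2 : (m:ℝ) * μ ^ 2 * L ^ 2 ≤ s ^ 2 * L ^ 2 := by
      have hmu2 : (m:ℝ) * μ ^ 2 ≤ s ^ 2 := by
        have h1 : (m:ℝ) * μ ^ 2 = s * μ := by rw [hsdef]; ring
        nlinarith [hμs, hs0, hμ0]
      exact mul_le_mul_of_nonneg_right hmu2 (sq_nonneg L)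
    have e1 : (m:ℝ) * (2 * μ * (s * L ^ 2 + τ * (D ^ 2 + s ^ 2 * L ^ 2)))
        = 2 * s ^ 2 * L ^ 2 + 2 * s * τ * D ^ 2 + 2 * τ * s ^ 3 * L ^ 2 := by
      rw [hsdef]; ring
    have hCm' : ‖xh - X (k+1)‖ ^ 2 ≤ D ^ 2 + 2 * μ * T
        + (2 * s ^ 2 * L ^ 2 + 2 * s * τ * D ^ 2 + 2 * τ * s ^ 3 * L ^ 2 + s ^ 2 * L ^ 2) := by
      have hd : (m:ℝ) * (2 * μ * (s * L ^ 2 + τ * (D ^ 2 + s ^ 2 * L ^ 2)) + μ ^ 2 * L ^ 2)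
          = (m:ℝ) * (2 * μ * (s * L ^ 2 + τ * (D ^ 2 + s ^ 2 * L ^ 2))) + (m:ℝ) * μ ^ 2 * L ^ 2 := by
        ring
      rw [hd, e1] at hCm
      linarith [hCm, e2]
    have hW : τh / 2 * ‖xh - X (k+1)‖ ^ 2 ≤ τh / 2 * (D ^ 2 + 2 * μ * T
        + (2 * s ^ 2 * L ^ 2 + 2 * s * τ * D ^ 2 + 2 * τ * s ^ 3 * L ^ 2 + s ^ 2 * L ^ 2)) :=
      mul_le_mul_of_nonneg_left hCm' (by positivity)
    have hstep2 : τh * μ * T ≤ -(τh ^ 2 / 2 * s * D ^ 2) := by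
      have h1 : τh * μ * T ≤ τh * μ * (-((m:ℝ) * (τh / 2) * D ^ 2)) :=
        mul_le_mul_of_nonneg_left hT (by positivity)
      have h2 : τh * μ * (-((m:ℝ) * (τh / 2) * D ^ 2)) = -(τh ^ 2 / 2 * s * D ^ 2) := by
        rw [hsdef]; ring
      linarith
    rw [hcdef, hAdef, hedef, ← hxh, ← hD, hF0]
    nlinarith [hW, hstep2, hF1]
  -- telescoping sum
  have hsum : ∑ k ∈ Finset.range (N+1), (c * ‖X k - P (X k)‖ ^ 2)
      ≤ (F (X 0) - Finf) + ((N:ℝ)+1) * e := by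
    have h1 : ∑ k ∈ Finset.range (N+1), (c * ‖X k - P (X k)‖ ^ 2)
        ≤ ∑ k ∈ Finset.range (N+1), ((F (X k) - F (X (k+1))) + e) := by
      refine Finset.sum_le_sum fun k hk => ?_
      exact key k (Nat.lt_succ_iff.mp (Finset.mem_range.mp hk))
    have h2 : ∑ k ∈ Finset.range (N+1), ((F (X k) - F (X (k+1))) + e)
        = (F (X 0) - F (X (N+1))) + ((N:ℝ)+1) * e := by
      rw [Finset.sum_add_distrib, Finset.sum_range_sub' (fun k => F (X k)),
        Finset.sum_const, Finset.card_range, nsmul_eq_mul]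
      push_cast; ring
    linarith [hFinf (X (N+1)), h1, h2]
  have hne : (Finset.range (N+1)).Nonempty := ⟨0, Finset.mem_range.mpr (Nat.succ_pos N)⟩
  have hgsum : ∑ _k ∈ Finset.range (N+1),
      (((F (X 0) - Finf) + ((N:ℝ)+1) * e) / ((N:ℝ)+1))
      = (F (X 0) - Finf) + ((N:ℝ)+1) * e := by
    rw [Finset.sum_const, Finset.card_range, nsmul_eq_mul]
    push_cast
    field_simp
  obtain ⟨k, hkmem, hkle⟩ := Finset.exists_le_of_sum_le hne (le_of_le_of_eq hsum hgsum.symm)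
  refine ⟨k, Nat.lt_succ_iff.mp (Finset.mem_range.mp hkmem), ?_⟩
  have hD2 : ‖X k - P (X k)‖ ^ 2
      ≤ (((F (X 0) - Finf) + ((N:ℝ)+1) * e) / ((N:ℝ)+1)) / c :=
    (le_div_iff₀ hc0).mpr (by linarith [hkle])
  have h5 : τh ^ 2 * ‖X k - P (X k)‖ ^ 2
      ≤ τh ^ 2 * ((((F (X 0) - Finf) + ((N:ℝ)+1) * e) / ((N:ℝ)+1)) / c) :=
    mul_le_mul_of_nonneg_left hD2 (by positivity)
  have hEq : τh ^ 2 * ((((F (X 0) - Finf) + ((N:ℝ)+1) * e) / ((N:ℝ)+1)) / c)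
      = (τh * (F (X 0) - Finf) + 3 / 2 * τh ^ 2 * L ^ 2) / (A * Q)
        + τ * τh ^ 2 * L ^ 2 / (A * Q ^ 2) := by
    rw [hcdef, hedef, hs, ← hQ2]
    have hQne : Q ≠ 0 := ne_of_gt hQ0
    have hAne : A ≠ 0 := ne_of_gt hA0
    have hτhne : τh ≠ 0 := ne_of_gt hτh0
    field_simp
    ring
  have hτhτ : 0 < τh - τ := by linarith
  have hr : (3:ℝ)/2 ≤ 1 + τh / (τh - τ) := by
    have h1 : (1:ℝ) ≤ τh / (τh - τ) := (one_le_div hτhτ).mpr (by linarith)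
    linarith
  have hr2 : (1:ℝ) ≤ (1 + τh / (τh - τ)) ^ 2 := by nlinarith [hr]
  rw [← hQ2, ← hAdef]
  have hden1 : 0 < A * Q := by positivity
  have hden2 : 0 < A * Q ^ 2 := by positivity
  have hnum1 : τh * (F (X 0) - Finf) + 3 / 2 * τh ^ 2 * L ^ 2
      ≤ τh * (F (X 0) - Finf) + (1 + τh / (τh - τ)) * τh ^ 2 * L ^ 2 := by
    have := mul_le_mul_of_nonneg_right hr (by positivity : (0:ℝ) ≤ τh ^ 2 * L ^ 2)
    linarith
  have hnum2 : τ * τh ^ 2 * L ^ 2 ≤ (1 + τh / (τh - τ)) ^ 2 * τ * τh ^ 2 * L ^ 2 := by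
    have := mul_le_mul_of_nonneg_right hr2 (by positivity : (0:ℝ) ≤ τ * τh ^ 2 * L ^ 2)
    linarith
  calc τh ^ 2 * ‖X k - P (X k)‖ ^ 2
      ≤ (τh * (F (X 0) - Finf) + 3 / 2 * τh ^ 2 * L ^ 2) / (A * Q)
        + τ * τh ^ 2 * L ^ 2 / (A * Q ^ 2) := by rw [← hEq]; exact h5
    _ ≤ (τh * (F (X 0) - Finf) + (1 + τh / (τh - τ)) * τh ^ 2 * L ^ 2) / (A * Q)
        + (1 + τh / (τh - τ)) ^ 2 * τ * τh ^ 2 * L ^ 2 / (A * Q ^ 2) := by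
      exact add_le_add ((div_le_div_iff_of_pos_right hden1).mpr hnum1) ((div_le_div_iff_of_pos_right hden2).mpr hnum2)
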